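/- Let μ = Σ_{n=1}^N w_n δ_{x_n} be a probability measure on ℝ with N distinct atoms x_1,…,x_N and positive weights w_1,…,w_N summing to 1, let P_0,…,P_{N−1} be monic real polynomials with deg P_k = k that are pairwise orthogonal in L²(μ), set P_N(x) = ∏_{n=1}^N (x − x_n), and suppose a_1,…,a_N ∈ ℝ and b_1,…,b_{N−1} > 0 satisfy the three-term recurrence x P_n(x) = b_n P_{n−1}(x) + a_{n+1} P_n(x) + P_{n+1}(x) for 0 ≤ n ≤ N−1 (with P_{−1} = 0). Then the set of eigenvalues of the Jacobi matrix J_{a,b} equals the set of atoms {x_1,…,x_N} of μ. -/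

import Mathlib

open MeasureTheory ProbabilityTheory Matrix Finset Real
open scoped ENNReal NNReal

noncomputable section

/-- The symmetric tridiagonal (Jacobi) matrix with diagonal `a` and
off-diagonal entries `√(b n)`. -/
def jacobiMatrix {N : ℕ} (a : Fin N → ℝ) (b : Fin (N - 1) → ℝ) :
    Matrix (Fin N) (Fin N) ℝ :=
  Matrix.of fun i j =>
    if i = j then a i
    else if h : (i : ℕ) + 1 = (j : ℕ) then
      Real.sqrt (b ⟨i, by have := j.isLt; omega⟩)
    else if h' : (j : ℕ) + 1 = (i : ℕ) then
      Real.sqrt (b ⟨j, by have := i.isLt; omega⟩)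
    else 0

lemma jacobiMatrix_isHermitian {N : ℕ} (a : Fin N → ℝ) (b : Fin (N - 1) → ℝ) :
    (jacobiMatrix a b).IsHermitian := by
  unfold Matrix.IsHermitian
  ext i j
  simp only [jacobiMatrix, Matrix.conjTranspose_apply, Matrix.of_apply, star_trivial]
  by_cases hij : i = j
  · subst hij; simp
  · have hji : j ≠ i := fun h => hij h.symm
    rw [if_neg hji, if_neg hij]
    by_cases h1 : (j : ℕ) + 1 = (i : ℕ)
    · have h2 : ¬((i : ℕ) + 1 = (j : ℕ)) := by omega
      rw [dif_pos h1, dif_neg h2, dif_pos h1]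
    · by_cases h2 : (i : ℕ) + 1 = (j : ℕ)
      · rw [dif_neg h1, dif_pos h2, dif_pos h2]
      · rw [dif_neg h1, dif_neg h2, dif_neg h2, dif_neg h1]

/-- Reordering of a finite tuple in decreasing order. -/
def sortDesc {N : ℕ} (v : Fin N → ℝ) : Fin N → ℝ :=
  fun i => v (Tuple.sort v (Fin.rev i))

/-- The eigenvalues of the Jacobi matrix `J_{a,b}`, in decreasing order. -/
def jacobiEigs {N : ℕ} (a : Fin N → ℝ) (b : Fin (N - 1) → ℝ) : Fin N → ℝ :=
  sortDesc (jacobiMatrix_isHermitian a b).eigenvalues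

/-- The squared first coordinates of unit eigenvectors of the Jacobi matrix `J_{a,b}`,
indexed compatibly with `jacobiEigs` (decreasing eigenvalue order):
`jacobiWeights hN a b i` is the squared first coordinate of a unit eigenvector
associated with the eigenvalue `jacobiEigs a b i`. -/
def jacobiWeights {N : ℕ} (hN : 0 < N) (a : Fin N → ℝ) (b : Fin (N - 1) → ℝ) :
    Fin N → ℝ :=
  fun i =>
    ((jacobiMatrix_isHermitian a b).eigenvectorBasis
        (Tuple.sort (jacobiMatrix_isHermitian a b).eigenvalues (Fin.rev i)) ⟨0, hN⟩) ^ 2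

/-- The spectral map: Jacobi data `(a, b)` is sent to the decreasingly ordered
eigenvalues together with the first `N - 1` spectral weights. -/
def spectralMap {N : ℕ} (hN : 0 < N) (a : Fin N → ℝ) (b : Fin (N - 1) → ℝ) :
    (Fin N → ℝ) × (Fin (N - 1) → ℝ) :=
  ⟨jacobiEigs a b, fun i => jacobiWeights hN a b ⟨i, by have := i.isLt; omega⟩⟩

/-- The Vandermonde product `∏_{i<j} (x j - x i)`. -/
def vdm {N : ℕ} (x : Fin N → ℝ) : ℝ :=
  ∏ i : Fin N, ∏ j ∈ Finset.Ioi i, (x j - x i)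

/-- The open chamber of decreasing vectors `x 0 > x 1 > … `. -/
def chamber (N : ℕ) : Set (Fin N → ℝ) := {x | ∀ i j : Fin N, i < j → x j < x i}

/-- The open simplex of positive weights with sum `< 1`. -/
def openSimplex (N : ℕ) : Set (Fin (N - 1) → ℝ) :=
  {w | (∀ i, 0 < w i) ∧ ∑ i, w i < 1}

/-- Extension of `N - 1` weights by the last weight `1 - ∑ w`. -/
def wExt {N : ℕ} (w : Fin (N - 1) → ℝ) : Fin N → ℝ :=
  fun n => if h : (n : ℕ) < N - 1 then w ⟨n, h⟩ else 1 - ∑ i, w i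

/-- The first `N` coordinates of a vector of length `2N - 1`. -/
def xPart {N : ℕ} (p : Fin (2 * N - 1) → ℝ) : Fin N → ℝ :=
  fun i => p ⟨i, by have := i.isLt; omega⟩

/-- The last `N - 1` coordinates of a vector of length `2N - 1`. -/
def wPart {N : ℕ} (p : Fin (2 * N - 1) → ℝ) : Fin (N - 1) → ℝ :=
  fun i => p ⟨N + i, by have := i.isLt; omega⟩

/-- The diagonal coefficients `a` built from the parameters `ξ`:
`a 1 = ξ 1`, `a n = ξ (2n-2) + ξ (2n-1)` (in one-based notation). -/
def xiToA {N : ℕ} (ξ : Fin (2 * N - 1) → ℝ) : Fin N → ℝ :=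
  fun n =>
    if h : (n : ℕ) = 0 then ξ ⟨0, by have := n.isLt; omega⟩
    else ξ ⟨2 * (n : ℕ) - 1, by have := n.isLt; omega⟩ +
      ξ ⟨2 * (n : ℕ), by have := n.isLt; omega⟩

/-- The off-diagonal coefficients `b` built from the parameters `ξ`:
`b n = ξ (2n-1) * ξ (2n)` (in one-based notation). -/
def xiToB {N : ℕ} (ξ : Fin (2 * N - 1) → ℝ) : Fin (N - 1) → ℝ :=
  fun n => ξ ⟨2 * (n : ℕ), by have := n.isLt; omega⟩ *
    ξ ⟨2 * (n : ℕ) + 1, by have := n.isLt; omega⟩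

/-- The chain-sequence parameters `ξ` built from canonical moments `c`:
`ξ 1 = c 1` and `ξ n = (1 - c (n-1)) * c n` (in one-based notation). -/
def cToXi {N : ℕ} (c : Fin (2 * N - 1) → ℝ) : Fin (2 * N - 1) → ℝ :=
  fun k =>
    if (k : ℕ) = 0 then c k
    else (1 - c ⟨(k : ℕ) - 1, by have := k.isLt; omega⟩) * c k

/-- The lower bidiagonal matrix `Ξ` with diagonal `√ξ 1, √ξ 3, …` and
subdiagonal `√ξ 2, √ξ 4, …` (in one-based notation). -/
def bidiag {N : ℕ} (ξ : Fin (2 * N - 1) → ℝ) : Matrix (Fin N) (Fin N) ℝ :=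
  Matrix.of fun i j =>
    if i = j then Real.sqrt (ξ ⟨2 * (i : ℕ), by have := i.isLt; omega⟩)
    else if h : (j : ℕ) + 1 = (i : ℕ) then
      Real.sqrt (ξ ⟨2 * (j : ℕ) + 1, by have := i.isLt; omega⟩)
    else 0

lemma mul_transpose_isHermitian {N : ℕ} (A : Matrix (Fin N) (Fin N) ℝ) :
    (A * Aᵀ).IsHermitian := by
  unfold Matrix.IsHermitian
  ext i j
  simp [Matrix.mul_apply, Matrix.conjTranspose_apply, Matrix.transpose_apply, mul_comm]

/-- extension of b to ℕ -/
def bExt {N : ℕ} (b : Fin (N - 1) → ℝ) : ℕ → ℝ :=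
  fun k => if h : k < N - 1 then b ⟨k, h⟩ else 0

lemma jacobi_mulVec {N : ℕ} (a : Fin N → ℝ) (b : Fin (N - 1) → ℝ) (u : Fin N → ℝ)
    (i : Fin N) :
    (jacobiMatrix a b).mulVec u i =
      (if h : 0 < (i : ℕ) then
          Real.sqrt (bExt b ((i : ℕ) - 1)) * u ⟨(i : ℕ) - 1, by omega⟩ else 0)
      + a i * u i
      + (if h : (i : ℕ) + 1 < N then
          Real.sqrt (bExt b (i : ℕ)) * u ⟨(i : ℕ) + 1, h⟩ else 0) := by
  classical
  have hsplit : (jacobiMatrix a b).mulVec u i =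
      ∑ j : Fin N, ((if (j : ℕ) + 1 = (i : ℕ) then Real.sqrt (bExt b ((j : ℕ))) * u j else 0)
        + (if j = i then a i * u j else 0)
        + (if (i : ℕ) + 1 = (j : ℕ) then Real.sqrt (bExt b (i : ℕ)) * u j else 0)) := by
    rw [Matrix.mulVec, dotProduct]
    refine Finset.sum_congr rfl fun j _ => ?_
    simp only [jacobiMatrix, Matrix.of_apply]
    by_cases h1 : i = j
    · subst h1
      simp
    · rw [if_neg h1, if_neg (fun h => h1 h.symm : ¬ j = i)]
      by_cases h2 : (i : ℕ) + 1 = (j : ℕ)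
      · have h3 : ¬ ((j : ℕ) + 1 = (i : ℕ)) := by omega
        rw [dif_pos h2, if_neg h3, if_pos h2]
        have hb : bExt b (i : ℕ) = b ⟨i, by have := j.isLt; omega⟩ := by
          simp [bExt, dif_pos (show (i : ℕ) < N - 1 by have := j.isLt; omega)]
        rw [hb]; ring
      · rw [dif_neg h2, if_neg h2]
        by_cases h3 : (j : ℕ) + 1 = (i : ℕ)
        · rw [dif_pos h3, if_pos h3]
          have hb : bExt b (j : ℕ) = b ⟨j, by have := i.isLt; omega⟩ := by
            simp [bExt, dif_pos (show (j : ℕ) < N - 1 by have := i.isLt; omega)]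
          rw [hb]; ring
        · rw [dif_neg h3, if_neg h3]; ring
  rw [hsplit, Finset.sum_add_distrib, Finset.sum_add_distrib]
  congr 1
  · congr 1
    · -- lower term
      by_cases hi : 0 < (i : ℕ)
      · rw [dif_pos hi]
        have hcond : ∀ j : Fin N,
            (if (j : ℕ) + 1 = (i : ℕ) then Real.sqrt (bExt b ((j : ℕ))) * u j else 0)
            = (if j = (⟨(i : ℕ) - 1, by omega⟩ : Fin N) then
                Real.sqrt (bExt b ((i : ℕ) - 1)) * u ⟨(i : ℕ) - 1, by omega⟩ else 0) := by
          intro j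
          by_cases h : (j : ℕ) + 1 = (i : ℕ)
          · rw [if_pos h, if_pos (by apply Fin.ext; simp; omega)]
            have : (j : ℕ) = (i : ℕ) - 1 := by omega
            congr 1
            · rw [this]
            · apply congrArg; apply Fin.ext; simp [this]
          · rw [if_neg h, if_neg (by intro hj; apply h; rw [hj]; simp; omega)]
        rw [Finset.sum_congr rfl fun j _ => hcond j, Finset.sum_ite_eq' univ _ _]
        simp
      · rw [dif_neg hi]
        refine Finset.sum_eq_zero fun j _ => ?_
        rw [if_neg (by omega)]
    · rw [Finset.sum_ite_eq' univ i (fun j => a i * u j)]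
      simp
  · by_cases hi : (i : ℕ) + 1 < N
    · rw [dif_pos hi]
      have hcond : ∀ j : Fin N,
          (if (i : ℕ) + 1 = (j : ℕ) then Real.sqrt (bExt b (i : ℕ)) * u j else 0)
          = (if j = (⟨(i : ℕ) + 1, hi⟩ : Fin N) then
              Real.sqrt (bExt b (i : ℕ)) * u ⟨(i : ℕ) + 1, hi⟩ else 0) := by
        intro j
        by_cases h : (i : ℕ) + 1 = (j : ℕ)
        · rw [if_pos h, if_pos (by apply Fin.ext; simp; omega)]
          congr 1
          apply congrArg; apply Fin.ext; simp [← h]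
        · rw [if_neg h, if_neg (by intro hj; apply h; rw [hj])]
      rw [Finset.sum_congr rfl fun j _ => hcond j, Finset.sum_ite_eq' univ _ _]
      simp
    · rw [dif_neg hi]
      refine Finset.sum_eq_zero fun j _ => ?_
      rw [if_neg (by have := j.isLt; omega)]

/-- the atoms of μ are the eigenvalues of the Jacobi matrix. -/
theorem atoms_are_eigenvalues
    (N : ℕ) (hN : 0 < N) (x w : Fin N → ℝ)
    (hx : Function.Injective x) (hw : ∀ n, 0 < w n) (hw1 : ∑ n, w n = 1)
    (P : ℕ → Polynomial ℝ) (a b : ℕ → ℝ)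
    (hmonic : ∀ k, k ≤ N - 1 → (P k).Monic)
    (hdeg : ∀ k, k ≤ N - 1 → (P k).natDegree = k)
    (horth : ∀ j k, j ≤ N - 1 → k ≤ N - 1 → j ≠ k →
      ∑ n, w n * ((P j).eval (x n) * (P k).eval (x n)) = 0)
    (hPN : P N = ∏ n, (Polynomial.X - Polynomial.C (x n)))
    (hb : ∀ n, 1 ≤ n → n ≤ N - 1 → 0 < b n)
    (hrec0 : Polynomial.X * P 0 = Polynomial.C (a 1) * P 0 + P 1)
    (hrec : ∀ n, 1 ≤ n → n ≤ N - 1 →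
      Polynomial.X * P n =
        Polynomial.C (b n) * P (n - 1) + Polynomial.C (a (n + 1)) * P n + P (n + 1)) :
    spectrum ℝ
        (jacobiMatrix (fun i : Fin N => a ((i : ℕ) + 1))
          (fun i : Fin (N - 1) => b ((i : ℕ) + 1)))
      = Set.range x := by
  classical
  set a' : Fin N → ℝ := fun i : Fin N => a ((i : ℕ) + 1) with ha'
  set b' : Fin (N - 1) → ℝ := fun i : Fin (N - 1) => b ((i : ℕ) + 1) with hb'
  set J := jacobiMatrix a' b' with hJ
  set c : ℕ → ℝ := fun k => ∏ j ∈ Finset.range k, Real.sqrt (b (j + 1)) with hc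
  have hcpos : ∀ k, k ≤ N - 1 → 0 < c k := by
    intro k hk
    refine Finset.prod_pos fun j hj => ?_
    exact Real.sqrt_pos.mpr (hb (j + 1) (by omega) (by simp at hj; omega))
  have hc0 : c 0 = 1 := by simp [hc]
  have hcsucc : ∀ k, c (k + 1) = c k * Real.sqrt (b (k + 1)) := by
    intro k; simp [hc, Finset.prod_range_succ]
  have hP0 : P 0 = 1 :=
    (Polynomial.Monic.natDegree_eq_zero (hmonic 0 (Nat.zero_le _))).mp
      (hdeg 0 (Nat.zero_le _))
  have hPNeval : ∀ n, (P N).eval (x n) = 0 := by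
    intro n
    rw [hPN, Polynomial.eval_prod]
    exact Finset.prod_eq_zero (Finset.mem_univ n) (by simp)
  set v : Fin N → Fin N → ℝ := fun n k => (P (k : ℕ)).eval (x n) / c (k : ℕ) with hv
  have hvne : ∀ n, v n ≠ 0 := by
    intro n h
    have h2 := congrFun h ⟨0, hN⟩
    rw [hv] at h2
    simp only [hP0, hc0] at h2
    simp at h2
  have hbext : ∀ k, (hk : k < N - 1) → bExt b' k = b (k + 1) := by
    intro k hk; simp [bExt, hb', dif_pos hk]
  -- the eigenvalue equation
  have heig : ∀ n, J.mulVec (v n) = x n • v n := by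
    intro n
    funext i
    rw [hJ, jacobi_mulVec]
    have hiN := i.isLt
    have h0' : x n = a 1 + (P 1).eval (x n) := by
      have h := congrArg (Polynomial.eval (x n)) hrec0
      simpa [hP0] using h
    rcases Nat.eq_zero_or_pos (i : ℕ) with hi0 | hipos
    · -- first row
      rw [dif_neg (by omega)]
      have hvi : v n i = 1 := by
        rw [hv]; simp only; rw [hi0, hP0, hc0]; simp
      have ha'i : a' i = a 1 := by rw [ha']; simp only; rw [hi0]
      rw [Pi.smul_apply, smul_eq_mul, hvi, mul_one, ha'i]
      by_cases h1 : (i : ℕ) + 1 < N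
      · rw [dif_pos h1]
        have hb1 : 0 < b 1 := hb 1 le_rfl (by omega)
        have hsb1 : Real.sqrt (b 1) ≠ 0 := by positivity
        have hterm : Real.sqrt (bExt b' (i : ℕ)) * v n ⟨(i : ℕ) + 1, h1⟩
            = (P 1).eval (x n) := by
          rw [hv]; simp only; rw [hi0]
          simp only [Nat.zero_add]
          rw [hbext 0 (by omega), hcsucc 0, hc0, one_mul,
            mul_comm, div_mul_cancel₀ _ hsb1]
        rw [hterm, zero_add]
        linarith
      · rw [dif_neg h1]
        have hN1 : N = 1 := by omega
        have hP1 : (P 1).eval (x n) = 0 := by rw [← hN1]; exact hPNeval n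
        rw [zero_add, add_zero]
        linarith
    · -- rows 1 ≤ i
      obtain ⟨m, hm⟩ : ∃ m, (i : ℕ) = m + 1 := ⟨(i : ℕ) - 1, by omega⟩
      rw [dif_pos hipos]
      have hbm : 0 < b (m + 1) := hb (m + 1) (by omega) (by omega)
      have hsbm : Real.sqrt (b (m + 1)) ≠ 0 := by positivity
      have hcm : 0 < c m := hcpos m (by omega)
      have hcm1 : 0 < c (m + 1) := hcpos (m + 1) (by omega)
      have hr : x n * (P (m + 1)).eval (x n)
          = b (m + 1) * (P m).eval (x n) + a (m + 2) * (P (m + 1)).eval (x n)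
            + (P (m + 2)).eval (x n) := by
        have h := congrArg (Polynomial.eval (x n)) (hrec (m + 1) (by omega) (by omega))
        simpa using h
      have hss : Real.sqrt (b (m + 1)) * Real.sqrt (b (m + 1)) = b (m + 1) :=
        Real.mul_self_sqrt hbm.le
      have hA : Real.sqrt (bExt b' ((i : ℕ) - 1)) * v n ⟨(i : ℕ) - 1, by omega⟩
          = b (m + 1) * (P m).eval (x n) / c (m + 1) := by
        rw [hv]; simp only; rw [show (i : ℕ) - 1 = m by omega,
          hbext m (by omega), hcsucc m]
        rw [eq_div_iff (by positivity : c m * Real.sqrt (b (m + 1)) ≠ 0)]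
        field_simp
        linear_combination Polynomial.eval (x n) (P m) * hss
      have hB : a' i * v n i
          = a (m + 2) * (P (m + 1)).eval (x n) / c (m + 1) := by
        rw [ha', hv]; simp only; rw [hm]
        ring
      have hC : (if h : (i : ℕ) + 1 < N then
            Real.sqrt (bExt b' (i : ℕ)) * v n ⟨(i : ℕ) + 1, h⟩ else 0)
          = (P (m + 2)).eval (x n) / c (m + 1) := by
        by_cases h1 : (i : ℕ) + 1 < N
        · rw [dif_pos h1]
          have hbm2 : 0 < b (m + 2) := hb (m + 2) (by omega) (by omega)
          have hsbm2 : Real.sqrt (b (m + 2)) ≠ 0 := by positivity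
          rw [hv]; simp only; rw [hm, show m + 1 + 1 = m + 2 by omega,
            hbext (m + 1) (by omega), hcsucc (m + 1)]
          rw [eq_div_iff (ne_of_gt hcm1)]
          field_simp
        · rw [dif_neg h1]
          have hPm2 : (P (m + 2)).eval (x n) = 0 := by
            rw [show m + 2 = N by omega]; exact hPNeval n
          rw [hPm2, zero_div]
      rw [hA, hB, hC, Pi.smul_apply, smul_eq_mul]
      rw [hv]; simp only; rw [hm]
      rw [← add_div, ← add_div, ← hr, mul_div_assoc]
  -- spectrum via eigenvalues
  set f : Module.End ℝ (Fin N → ℝ) := Matrix.toLinAlgEquiv' J with hf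
  have hfapply : ∀ u : Fin N → ℝ, f u = J.mulVec u := fun u =>
    Matrix.toLinAlgEquiv'_apply J u
  have heigvec : ∀ n, Module.End.HasEigenvector f (x n) (v n) := fun n =>
    ⟨Module.End.mem_eigenspace_iff.mpr (by rw [hfapply, heig n]), hvne n⟩
  have hspec : spectrum ℝ J = spectrum ℝ f :=
    (AlgEquiv.spectrum_eq Matrix.toLinAlgEquiv' J).symm
  rw [hspec]
  ext μ
  constructor
  · intro hμ
    by_contra hnot
    have hev : Module.End.HasEigenvalue f μ :=
      Module.End.hasEigenvalue_iff_mem_spectrum.mpr hμ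
    obtain ⟨u, hu⟩ := hev.exists_hasEigenvector
    set μs : Option (Fin N) → ℝ := fun o => o.elim μ x with hμs
    have hinj : Function.Injective μs := by
      rintro (_ | n) (_ | m) h
      · rfl
      · exact absurd (⟨m, h.symm⟩ : μ ∈ Set.range x) hnot
      · exact absurd (⟨n, h⟩ : μ ∈ Set.range x) hnot
      · exact congrArg some (hx h)
    set vs : Option (Fin N) → (Fin N → ℝ) := fun o => o.elim u v with hvs
    have hli : LinearIndependent ℝ vs :=
      Module.End.eigenvectors_linearIndependent' f μs hinj vs
        (fun o => by cases o with
          | none => exact hu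
          | some n => exact heigvec n)
    have hcard := hli.fintype_card_le_finrank
    rw [Module.finrank_fin_fun] at hcard
    simp [Fintype.card_option] at hcard
  · rintro ⟨n, rfl⟩
    exact Module.End.hasEigenvalue_iff_mem_spectrum.mp
      (Module.End.hasEigenvalue_of_hasEigenvector (heigvec n))
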